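/- For real numbers p, q, r, s > 0 with ps ≠ qr, the integral ∫₀^∞ log(px + q)/(rx + s)² dx equals p(log p + log s − log q − log r)/(r(ps − qr)) + log(q)/(rs). -/

import Mathlib

open MeasureTheory Real Filter Set Topology

lemma aux_log_le_two_sqrt (t : ℝ) (ht : 0 < t) : Real.log t ≤ 2 * Real.sqrt t := by
  have h1 : Real.log t = 2 * Real.log (Real.sqrt t) := by
    rw [Real.log_sqrt ht.le]; ring
  have h2 : Real.log (Real.sqrt t) ≤ Real.sqrt t - 1 :=
    Real.log_le_sub_one_of_pos (Real.sqrt_pos.mpr ht)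
  nlinarith [Real.sqrt_nonneg t]

/-- For `p, q, r, s > 0` with `ps ≠ qr`,
`∫₀^∞ log(px+q)/(rx+s)² dx = p(log p + log s − log q − log r)/(r(ps−qr)) + log q/(rs)`. -/
theorem log_over_square_integral (p q r s : ℝ) (hp : 0 < p) (hq : 0 < q)
    (hr : 0 < r) (hs : 0 < s) (h : p * s ≠ q * r) :
    ∫ x in Set.Ioi (0 : ℝ), Real.log (p * x + q) / (r * x + s) ^ 2 =
      p * (Real.log p + Real.log s - Real.log q - Real.log r) / (r * (p * s - q * r)) +
        Real.log q / (r * s) := by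
  have hd : p * s - q * r ≠ 0 := sub_ne_zero.mpr h
  have hr0 : r ≠ 0 := hr.ne'
  have hs0 : s ≠ 0 := hs.ne'
  have hpx : ∀ x : ℝ, 0 ≤ x → 0 < p * x + q := by
    intro x hx; have : 0 ≤ p * x := mul_nonneg hp.le hx; linarith
  have hrx : ∀ x : ℝ, 0 ≤ x → 0 < r * x + s := by
    intro x hx; have : 0 ≤ r * x := mul_nonneg hr.le hx; linarith
  set c : ℝ := p / (r * (p * s - q * r)) with hc
  set F : ℝ → ℝ := fun x =>
    -(Real.log (p * x + q) / (r * (r * x + s))) +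
      c * (Real.log (p * x + q) - Real.log (r * x + s)) with hF
  -- derivative
  have hderiv : ∀ x ∈ Set.Ici (0 : ℝ), HasDerivAt F (Real.log (p * x + q) / (r * x + s) ^ 2) x := by
    intro x hx
    have ha := hpx x hx
    have hb := hrx x hx
    have h1 : HasDerivAt (fun x : ℝ => p * x + q) p x := by
      simpa using ((hasDerivAt_id x).const_mul p).add_const q
    have h2 : HasDerivAt (fun x : ℝ => r * x + s) r x := by
      simpa using ((hasDerivAt_id x).const_mul r).add_const s
    have hlog1 : HasDerivAt (fun x : ℝ => Real.log (p * x + q)) (p / (p * x + q)) x :=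
      h1.log ha.ne'
    have hlog2 : HasDerivAt (fun x : ℝ => Real.log (r * x + s)) (r / (r * x + s)) x :=
      h2.log hb.ne'
    have hden : HasDerivAt (fun x : ℝ => r * (r * x + s)) (r * r) x := h2.const_mul r
    have hbne : r * (r * x + s) ≠ 0 := mul_ne_zero hr0 hb.ne'
    have t1 := ((hlog1.div hden hbne)).neg
    have t2 := (hlog1.sub hlog2).const_mul c
    have := t1.add t2
    refine this.congr_deriv ?_
    rw [hc]
    have hd' : p * s - r * q ≠ 0 := by rwa [mul_comm r q]
    rw [div_sub_div _ _ ha.ne' hb.ne', div_mul_eq_mul_div, mul_div_assoc, eq_div_iff (pow_ne_zero 2 hb.ne')]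
    field_simp
    ring
  -- limit at infinity
  have hqtend : Tendsto (fun x : ℝ => (p * x + q) / (r * x + s)) atTop (𝓝 (p / r)) := by
    have heq : ∀ᶠ x in atTop, (p + q * x⁻¹) / (r + s * x⁻¹) = (p * x + q) / (r * x + s) := by
      filter_upwards [eventually_gt_atTop (0 : ℝ)] with x hx
      rw [div_eq_div_iff (by have := hrx x hx.le; positivity)
        (by have := hrx x hx.le; positivity)]
      field_simp
      try ring
    refine Tendsto.congr' heq ?_
    have hnum : Tendsto (fun x : ℝ => p + q * x⁻¹) atTop (𝓝 (p + q * 0)) :=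
      tendsto_const_nhds.add (tendsto_inv_atTop_zero.const_mul q)
    have hde : Tendsto (fun x : ℝ => r + s * x⁻¹) atTop (𝓝 (r + s * 0)) :=
      tendsto_const_nhds.add (tendsto_inv_atTop_zero.const_mul s)
    simpa using (show Tendsto (fun x : ℝ => (p + q * x⁻¹) / (r + s * x⁻¹)) atTop (𝓝 ((p + q * 0) / (r + s * 0))) from hnum.div hde (by simpa using hr0))
  have hq2tend : Tendsto (fun x : ℝ => (p * x + q) / (r * (r * x + s))) atTop
      (𝓝 (p / (r * r))) := by
    have heq : ∀ᶠ x in atTop,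
        (p + q * x⁻¹) / (r * (r + s * x⁻¹)) = (p * x + q) / (r * (r * x + s)) := by
      filter_upwards [eventually_gt_atTop (0 : ℝ)] with x hx
      rw [div_eq_div_iff (by have := hrx x hx.le; positivity)
        (by have := hrx x hx.le; positivity)]
      field_simp
      try ring
    refine Tendsto.congr' heq ?_
    have hnum : Tendsto (fun x : ℝ => p + q * x⁻¹) atTop (𝓝 (p + q * 0)) :=
      tendsto_const_nhds.add (tendsto_inv_atTop_zero.const_mul q)
    have hde : Tendsto (fun x : ℝ => r * (r + s * x⁻¹)) atTop (𝓝 (r * (r + s * 0))) :=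
      (tendsto_const_nhds.add (tendsto_inv_atTop_zero.const_mul s)).const_mul r
    simpa using (show Tendsto (fun x : ℝ => (p + q * x⁻¹) / (r * (r + s * x⁻¹))) atTop (𝓝 ((p + q * 0) / (r * (r + s * 0)))) from hnum.div hde (by simp [hr0]))
  have hFlim : Tendsto F atTop (𝓝 (0 + c * (Real.log p - Real.log r))) := by
    have l1 : Tendsto (fun x : ℝ => -(Real.log (p * x + q) / (r * (r * x + s)))) atTop (𝓝 0) := by
      have A : Tendsto (fun y : ℝ => Real.log y / y) atTop (𝓝 0) :=
        Real.isLittleO_log_id_atTop.tendsto_div_nhds_zero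
      have hcomp : Tendsto (fun x : ℝ => p * x + q) atTop atTop :=
        tendsto_atTop_add_const_right _ q (tendsto_id.const_mul_atTop hp)
      have hA : Tendsto (fun x : ℝ => Real.log (p * x + q) / (p * x + q)) atTop (𝓝 0) :=
        A.comp hcomp
      have := (hA.mul hq2tend).neg
      rw [zero_mul, neg_zero] at this
      refine Tendsto.congr' ?_ this
      filter_upwards [eventually_ge_atTop (0 : ℝ)] with x hx
      have ha := (hpx x hx).ne'
      have hb := (hrx x hx).ne'
      rw [div_mul_div_comm, mul_comm (p * x + q) (r * (r * x + s)),
        mul_div_mul_right _ _ ha]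
    have l2 : Tendsto (fun x : ℝ => c * (Real.log (p * x + q) - Real.log (r * x + s))) atTop
        (𝓝 (c * (Real.log p - Real.log r))) := by
      have hl : Tendsto (fun x : ℝ => Real.log ((p * x + q) / (r * x + s))) atTop
          (𝓝 (Real.log (p / r))) :=
        (Real.continuousAt_log (div_pos hp hr).ne').tendsto.comp hqtend
      have hl' : Tendsto (fun x : ℝ => Real.log (p * x + q) - Real.log (r * x + s)) atTop
          (𝓝 (Real.log p - Real.log r)) := by
        rw [← Real.log_div hp.ne' hr0]
        refine Tendsto.congr' ?_ hl
        filter_upwards [eventually_ge_atTop (0 : ℝ)] with x hx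
        rw [Real.log_div (hpx x hx).ne' (hrx x hx).ne']
      exact hl'.const_mul c
    exact l1.add l2
  -- integrability
  have hcontf : ContinuousOn (fun x : ℝ => Real.log (p * x + q) / (r * x + s) ^ 2)
      (Set.Ici 0) := by
    apply ContinuousOn.div
    · exact ContinuousOn.log (by fun_prop) (fun x hx => (hpx x hx).ne')
    · fun_prop
    · exact fun x hx => pow_ne_zero 2 (hrx x hx).ne'
  have hint : IntegrableOn (fun x : ℝ => Real.log (p * x + q) / (r * x + s) ^ 2)
      (Set.Ioi 0) := by
    have hsplit : Set.Ioi (0 : ℝ) = Set.Ioc 0 1 ∪ Set.Ioi 1 :=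
      (Set.Ioc_union_Ioi_eq_Ioi zero_le_one).symm
    rw [hsplit]
    apply IntegrableOn.union
    · exact ((hcontf.mono (by intro x hx; exact hx.1)).integrableOn_Icc).mono_set
        Set.Ioc_subset_Icc_self
    · set C : ℝ := (|Real.log q| + 2 * Real.sqrt (p + q)) / r ^ 2 with hC
      have hCpos : 0 ≤ C := by
        apply div_nonneg _ (by positivity)
        have := Real.sqrt_nonneg (p + q)
        have := abs_nonneg (Real.log q)
        linarith
      have hg : Integrable (fun x : ℝ => C * x ^ (-(3:ℝ)/2))
          (volume.restrict (Set.Ioi (1:ℝ))) := by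
        have := integrableOn_Ioi_rpow_of_lt (show (-(3:ℝ)/2) < -1 by norm_num)
          (show (0:ℝ) < 1 by norm_num)
        exact this.const_mul C
      refine Integrable.mono hg ((hcontf.mono ?_).aestronglyMeasurable measurableSet_Ioi) ?_
      · intro x hx; exact le_of_lt (lt_of_le_of_lt zero_le_one (Set.mem_Ioi.mp hx))
      · rw [ae_restrict_iff' measurableSet_Ioi]
        refine ae_of_all _ fun x hx => ?_
        have hx1 : (1:ℝ) < x := hx
        have hx0 : (0:ℝ) < x := lt_trans zero_lt_one hx1
        have ha := hpx x hx0.le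
        have hb := hrx x hx0.le
        have hsx : (1:ℝ) ≤ Real.sqrt x := by
          rw [show (1:ℝ) = Real.sqrt 1 by simp]
          exact Real.sqrt_le_sqrt hx1.le
        have hla : |Real.log (p * x + q)| ≤ |Real.log q| + 2 * Real.sqrt (p * x + q) := by
          rw [abs_le]
          constructor
          · have h1 : Real.log q ≤ Real.log (p * x + q) :=
              Real.log_le_log hq (by nlinarith)
            have h2 : -|Real.log q| ≤ Real.log q := neg_abs_le _
            have := Real.sqrt_nonneg (p * x + q)
            linarith
          · have h1 := aux_log_le_two_sqrt _ ha
            have := abs_nonneg (Real.log q)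
            linarith
        have hsq : Real.sqrt (p * x + q) ≤ Real.sqrt (p + q) * Real.sqrt x := by
          rw [← Real.sqrt_mul (by positivity) x]
          apply Real.sqrt_le_sqrt
          nlinarith
        have hnum : |Real.log (p * x + q)| ≤
            (|Real.log q| + 2 * Real.sqrt (p + q)) * Real.sqrt x := by
          have h1 : |Real.log q| ≤ |Real.log q| * Real.sqrt x := by
            nlinarith [abs_nonneg (Real.log q)]
          calc |Real.log (p * x + q)| ≤ |Real.log q| + 2 * Real.sqrt (p * x + q) := hla
            _ ≤ |Real.log q| * Real.sqrt x + 2 * (Real.sqrt (p + q) * Real.sqrt x) := by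
                nlinarith [hsq, h1]
            _ = (|Real.log q| + 2 * Real.sqrt (p + q)) * Real.sqrt x := by ring
        have hden : r ^ 2 * x ^ 2 ≤ (r * x + s) ^ 2 := by
          nlinarith [mul_pos (mul_pos hr hx0) hs, sq_nonneg s]
        have hnorm : ‖Real.log (p * x + q) / (r * x + s) ^ 2‖ =
            |Real.log (p * x + q)| / (r * x + s) ^ 2 := by
          rw [Real.norm_eq_abs, abs_div, abs_of_pos (by positivity : (0:ℝ) < (r * x + s) ^ 2)]
        rw [hnorm]
        have hle : |Real.log (p * x + q)| / (r * x + s) ^ 2 ≤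
            ((|Real.log q| + 2 * Real.sqrt (p + q)) * Real.sqrt x) / (r ^ 2 * x ^ 2) := by
          apply div_le_div₀ (by positivity) hnum (by positivity) hden
        have heq : ((|Real.log q| + 2 * Real.sqrt (p + q)) * Real.sqrt x) / (r ^ 2 * x ^ 2)
            = C * x ^ (-(3:ℝ)/2) := by
          have hxr : Real.sqrt x * (x ^ 2)⁻¹ = x ^ (-(3:ℝ)/2) := by
            rw [Real.sqrt_eq_rpow, ← Real.rpow_natCast x 2, ← Real.rpow_neg hx0.le,
              ← Real.rpow_add hx0]
            norm_num
          rw [hC, show ((|Real.log q| + 2 * Real.sqrt (p + q)) * Real.sqrt x) / (r ^ 2 * x ^ 2)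
            = ((|Real.log q| + 2 * Real.sqrt (p + q)) / r ^ 2) * (Real.sqrt x * (x ^ 2)⁻¹) by
              ring, hxr]
        calc |Real.log (p * x + q)| / (r * x + s) ^ 2 ≤ C * x ^ (-(3:ℝ)/2) :=
            hle.trans_eq heq
          _ ≤ ‖C * x ^ (-(3:ℝ)/2)‖ := le_abs_self _
  have key := integral_Ioi_of_hasDerivAt_of_tendsto' hderiv hint hFlim
  rw [key, hF, hc]
  simp only [mul_zero, zero_add]
  field_simp
  ring
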